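/- Let F be a field, n ≥ 1, and for linearly independent n×n matrices A, B over F let R(A,B) denote the algebra on F^{2+n} with multiplication u·v = (u''ᵀAv'', u''ᵀBv'', 0, …, 0), where u'' denotes the vector of the last n coordinates of u. Then for linearly independent pairs (A,B) and (C,D) of n×n matrices, the algebras R(A,B) and R(C,D) are isomorphic as F-algebras if and only if there exist an invertible n×n matrix S and an invertible 2×2 matrix [r_ij] over F such that SᵀAS = r₁₁C + r₁₂D and SᵀBS = r₂₁C + r₂₂D. -/

import Mathlib

open Matrix

/-- The last `n` coordinates of a vector in `F^(2+n)`. -/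
def tailCoords {F : Type*} {n : ℕ} (u : Fin (2 + n) → F) : Fin n → F :=
  fun j => u (Fin.natAdd 2 j)

/-- The multiplication `u·v = (u''ᵀ A v'', u''ᵀ B v'', 0, …, 0)` on `F^(2+n)`, where
`u''` is the vector of the last `n` coordinates of `u`. -/
def amul {F : Type*} [Field F] {n : ℕ} (A B : Matrix (Fin n) (Fin n) F)
    (u v : Fin (2 + n) → F) : Fin (2 + n) → F :=
  Fin.append ![tailCoords u ⬝ᵥ A *ᵥ tailCoords v, tailCoords u ⬝ᵥ B *ᵥ tailCoords v]
    (0 : Fin n → F)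

namespace MatrixPairAux

set_option linter.unusedSectionVars false

variable {F : Type*} [Field F] {n : ℕ}

/-- The first two coordinates. -/
def headCoords (u : Fin (2 + n) → F) : Fin 2 → F := fun i => u (Fin.castAdd n i)

lemma head_append (a : Fin 2 → F) (b : Fin n → F) :
    headCoords (Fin.append a b) = a := by
  funext i; simp [headCoords, Fin.append_left]

lemma tail_append (a : Fin 2 → F) (b : Fin n → F) :
    tailCoords (Fin.append a b) = b := by
  funext j; simp [tailCoords, Fin.append_right]

lemma append_head_tail (u : Fin (2 + n) → F) :
    Fin.append (headCoords u) (tailCoords u) = u := by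
  funext i
  refine Fin.addCases (fun i => ?_) (fun j => ?_) i
  · simp [Fin.append_left, headCoords]
  · simp [Fin.append_right, tailCoords]

lemma tailC_add (u v : Fin (2 + n) → F) :
    tailCoords (u + v) = tailCoords u + tailCoords v := rfl

lemma tailC_sub (u v : Fin (2 + n) → F) :
    tailCoords (u - v) = tailCoords u - tailCoords v := rfl

lemma tailC_smul (c : F) (u : Fin (2 + n) → F) :
    tailCoords (c • u) = c • tailCoords u := rfl

lemma tail_amul (A B : Matrix (Fin n) (Fin n) F) (u v : Fin (2 + n) → F) :
    tailCoords (amul A B u v) = 0 := tail_append _ _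

lemma head_amul (A B : Matrix (Fin n) (Fin n) F) (u v : Fin (2 + n) → F) :
    headCoords (amul A B u v) =
      ![tailCoords u ⬝ᵥ A *ᵥ tailCoords v, tailCoords u ⬝ᵥ B *ᵥ tailCoords v] :=
  head_append _ _

/-- Embedding of the tail part. -/
def jMap : (Fin n → F) →ₗ[F] (Fin (2 + n) → F) where
  toFun x := Fin.append 0 x
  map_add' x y := by
    funext i
    refine Fin.addCases (fun i => ?_) (fun j => ?_) i <;>
      simp [Fin.append_left, Fin.append_right]
  map_smul' c x := by
    funext i
    refine Fin.addCases (fun i => ?_) (fun j => ?_) i <;>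
      simp [Fin.append_left, Fin.append_right]

/-- Embedding of the head part. -/
def j2Map : (Fin 2 → F) →ₗ[F] (Fin (2 + n) → F) where
  toFun x := Fin.append x 0
  map_add' x y := by
    funext i
    refine Fin.addCases (fun i => ?_) (fun j => ?_) i <;>
      simp [Fin.append_left, Fin.append_right]
  map_smul' c x := by
    funext i
    refine Fin.addCases (fun i => ?_) (fun j => ?_) i <;>
      simp [Fin.append_left, Fin.append_right]

lemma tail_jMap (x : Fin n → F) : tailCoords (jMap x : Fin (2 + n) → F) = x :=
  tail_append _ _

lemma head_j2Map (x : Fin 2 → F) : headCoords (j2Map x : Fin (2 + n) → F) = x :=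
  head_append _ _

lemma tail_j2Map (x : Fin 2 → F) : tailCoords (j2Map x : Fin (2 + n) → F) = 0 :=
  tail_append _ _

lemma single_dot {k : ℕ} (M : Matrix (Fin k) (Fin k) F) (i j : Fin k) :
    Pi.single i (1 : F) ⬝ᵥ M *ᵥ Pi.single j (1 : F) = M i j := by
  simp [single_dotProduct, Matrix.mulVec_single]

lemma matrix_eq_of_dot {k : ℕ} {M N : Matrix (Fin k) (Fin k) F}
    (h : ∀ x y : Fin k → F, x ⬝ᵥ M *ᵥ y = x ⬝ᵥ N *ᵥ y) : M = N := by
  ext i j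
  have := h (Pi.single i 1) (Pi.single j 1)
  rwa [single_dot, single_dot] at this

lemma exists_dot_ne_zero {M : Matrix (Fin n) (Fin n) F} (hM : M ≠ 0) :
    ∃ x y : Fin n → F, x ⬝ᵥ M *ᵥ y ≠ 0 := by
  by_contra h
  push_neg at h
  apply hM
  ext i j
  have := h (Pi.single i 1) (Pi.single j 1)
  rwa [single_dot] at this

lemma combo_dot (a b : F) (A B : Matrix (Fin n) (Fin n) F) (x y : Fin n → F) :
    x ⬝ᵥ (a • A + b • B) *ᵥ y = a * (x ⬝ᵥ A *ᵥ y) + b * (x ⬝ᵥ B *ᵥ y) := by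
  simp [Matrix.add_mulVec, Matrix.smul_mulVec, dotProduct_add, smul_eq_mul,
    dotProduct_smul]

lemma dot_conj (S M : Matrix (Fin n) (Fin n) F) (x y : Fin n → F) :
    (S *ᵥ x) ⬝ᵥ M *ᵥ (S *ᵥ y) = x ⬝ᵥ (Sᵀ * M * S) *ᵥ y := by
  rw [← Matrix.mulVec_mulVec, ← Matrix.mulVec_mulVec, Matrix.dotProduct_mulVec x,
    Matrix.vecMul_transpose]

lemma conj_eq {k : ℕ} (P Q : Matrix (Fin k) (Fin k) F) (h : P * Q = 1)
    (X : Matrix (Fin k) (Fin k) F) : Qᵀ * (Pᵀ * X * P) * Q = X := by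
  have hQP : Qᵀ * Pᵀ = 1 := by rw [← Matrix.transpose_mul, h, Matrix.transpose_one]
  calc Qᵀ * (Pᵀ * X * P) * Q = Qᵀ * Pᵀ * X * (P * Q) := by
        simp only [Matrix.mul_assoc]
    _ = X := by rw [hQP, h, Matrix.one_mul, Matrix.mul_one]

lemma mulVec_fin2 (M : Matrix (Fin 2) (Fin 2) F) (z : Fin 2 → F) :
    M *ᵥ z = ![M 0 0 * z 0 + M 0 1 * z 1, M 1 0 * z 0 + M 1 1 * z 1] := by
  funext i
  fin_cases i <;> simp [Matrix.mulVec, dotProduct, Fin.sum_univ_two]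

lemma entry_fin2 (M N : Matrix (Fin 2) (Fin 2) F) (i j : Fin 2) :
    (M * N) i j = M i 0 * N 0 j + M i 1 * N 1 j := by
  simp [Matrix.mul_apply, Fin.sum_univ_two]

/-- Any multiplicative linear map sends the subspace `{tail = 0}` (which is spanned
by products) into itself. -/
lemma tail_map_zero (A B C D : Matrix (Fin n) (Fin n) F)
    (hAB : ∀ a b : F, a • A + b • B = 0 → a = 0 ∧ b = 0)
    (f : (Fin (2 + n) → F) →ₗ[F] (Fin (2 + n) → F))
    (hf : ∀ u v, f (amul A B u v) = amul C D (f u) (f v))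
    (w : Fin (2 + n) → F) (hw : tailCoords w = 0) : tailCoords (f w) = 0 := by
  have hA0 : A ≠ 0 := by
    intro h
    exact one_ne_zero ((hAB 1 0 (by simp [h])).1)
  obtain ⟨x₁, y₁, h1⟩ := exists_dot_ne_zero hA0
  set a₁ := x₁ ⬝ᵥ A *ᵥ y₁ with ha₁
  set b₁ := x₁ ⬝ᵥ B *ᵥ y₁ with hb₁
  have hN : (-b₁) • A + a₁ • B ≠ 0 := fun h => h1 (hAB _ _ h).2
  obtain ⟨x₂, y₂, h2⟩ := exists_dot_ne_zero hN
  rw [combo_dot] at h2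
  set a₂ := x₂ ⬝ᵥ A *ᵥ y₂ with ha₂
  set b₂ := x₂ ⬝ᵥ B *ᵥ y₂ with hb₂
  have hdet : a₁ * b₂ - b₁ * a₂ ≠ 0 := by
    intro h; exact h2 (by linear_combination h)
  set det := a₁ * b₂ - b₁ * a₂ with hdetdef
  set c₁ := (headCoords w 0 * b₂ - headCoords w 1 * a₂) / det with hc₁
  set c₂ := (a₁ * headCoords w 1 - b₁ * headCoords w 0) / det with hc₂
  have hhead : headCoords w = c₁ • ![a₁, b₁] + c₂ • ![a₂, b₂] := by
    funext i
    fin_cases i <;>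
      · simp only [Pi.add_apply, Pi.smul_apply, Matrix.cons_val_zero, Matrix.cons_val_one,
          Matrix.head_cons, smul_eq_mul, hc₁, hc₂, Fin.zero_eta, Fin.mk_one]
        field_simp
        ring
  have h3 : amul A B (Fin.append 0 x₁) (Fin.append 0 y₁) = Fin.append ![a₁, b₁] 0 := by
    simp only [amul, tail_append, ha₁, hb₁]
  have h4 : amul A B (Fin.append 0 x₂) (Fin.append 0 y₂) = Fin.append ![a₂, b₂] 0 := by
    simp only [amul, tail_append, ha₂, hb₂]
  have hw2 : w = c₁ • amul A B (Fin.append 0 x₁) (Fin.append 0 y₁)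
      + c₂ • amul A B (Fin.append 0 x₂) (Fin.append 0 y₂) := by
    rw [h3, h4]
    conv_lhs => rw [← append_head_tail w, hw, hhead]
    funext i
    refine Fin.addCases (fun i => ?_) (fun j => ?_) i
    · simp only [Fin.append_left, Pi.add_apply, Pi.smul_apply, smul_eq_mul]
    · simp [Fin.append_right]
  rw [hw2, map_add, f.map_smul, f.map_smul, hf, hf, tailC_add, tailC_smul, tailC_smul,
    tail_amul, tail_amul, smul_zero, smul_zero, add_zero]

/-- Block-diagonal linear map `u ↦ (r *ᵥ head u, S *ᵥ tail u)`. -/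
def blockMap (r : Matrix (Fin 2) (Fin 2) F) (S : Matrix (Fin n) (Fin n) F) :
    (Fin (2 + n) → F) →ₗ[F] (Fin (2 + n) → F) where
  toFun u := Fin.append (r *ᵥ headCoords u) (S *ᵥ tailCoords u)
  map_add' u v := by
    have h1 : headCoords (u + v) = headCoords u + headCoords v := rfl
    have h2 : tailCoords (u + v) = tailCoords u + tailCoords v := rfl
    simp only [h1, h2, Matrix.mulVec_add]
    funext i
    refine Fin.addCases (fun i => ?_) (fun j => ?_) i <;>
      simp [Fin.append_left, Fin.append_right, -Matrix.mulVec_fin_two]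
  map_smul' c u := by
    have h1 : headCoords (c • u) = c • headCoords u := rfl
    have h2 : tailCoords (c • u) = c • tailCoords u := rfl
    simp only [h1, h2, Matrix.mulVec_smul, RingHom.id_apply]
    funext i
    refine Fin.addCases (fun i => ?_) (fun j => ?_) i <;>
      simp [Fin.append_left, Fin.append_right, -Matrix.mulVec_fin_two]

lemma blockMap_apply (r : Matrix (Fin 2) (Fin 2) F) (S : Matrix (Fin n) (Fin n) F)
    (u : Fin (2 + n) → F) :
    blockMap r S u = Fin.append (r *ᵥ headCoords u) (S *ᵥ tailCoords u) := rfl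

lemma tail_blockMap (r : Matrix (Fin 2) (Fin 2) F) (S : Matrix (Fin n) (Fin n) F)
    (u : Fin (2 + n) → F) :
    tailCoords (blockMap r S u) = S *ᵥ tailCoords u := tail_append _ _

lemma blockMap_blockMap (r r' : Matrix (Fin 2) (Fin 2) F)
    (S S' : Matrix (Fin n) (Fin n) F) (u : Fin (2 + n) → F) :
    blockMap r' S' (blockMap r S u)
      = Fin.append ((r' * r) *ᵥ headCoords u) ((S' * S) *ᵥ tailCoords u) := by
  rw [blockMap_apply, blockMap_apply, head_append, tail_append, Matrix.mulVec_mulVec,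
    Matrix.mulVec_mulVec]

end MatrixPairAux

open MatrixPairAux

/-- **Lemma 5 (uniqueness part)**: for linearly independent pairs `(A,B)` and `(C,D)`
of `n × n` matrices, the algebras `R(A,B)` and `R(C,D)` on `F^(2+n)` with
multiplications `amul A B` and `amul C D` are isomorphic if and only if there exist an
invertible `n × n` matrix `S` and an invertible `2 × 2` matrix `[rᵢⱼ]` with
`SᵀAS = r₁₁C + r₁₂D` and `SᵀBS = r₂₁C + r₂₂D`. -/
theorem matrix_pair_algebras_iso_iff_congruent_substitution
    {F : Type*} [Field F] {n : ℕ} (hn : 1 ≤ n)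
    (A B C D : Matrix (Fin n) (Fin n) F)
    (hAB : ∀ a b : F, a • A + b • B = 0 → a = 0 ∧ b = 0)
    (hCD : ∀ a b : F, a • C + b • D = 0 → a = 0 ∧ b = 0) :
    (∃ e : (Fin (2 + n) → F) ≃ₗ[F] (Fin (2 + n) → F),
      ∀ u v, e (amul A B u v) = amul C D (e u) (e v)) ↔
    (∃ (S : Matrix (Fin n) (Fin n) F) (r : Matrix (Fin 2) (Fin 2) F),
      IsUnit S ∧ IsUnit r ∧
      Sᵀ * A * S = r 0 0 • C + r 0 1 • D ∧
      Sᵀ * B * S = r 1 0 • C + r 1 1 • D) := by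
  constructor
  · -- iso ⟹ congruent substitution
    rintro ⟨e, he⟩
    have he' : ∀ u v, e.symm (amul C D u v) = amul A B (e.symm u) (e.symm v) := by
      intro u v
      have h := he (e.symm u) (e.symm v)
      rw [e.apply_symm_apply, e.apply_symm_apply] at h
      rw [← h, e.symm_apply_apply]
    have hW : ∀ w, tailCoords w = 0 → tailCoords (e w) = 0 :=
      tail_map_zero A B C D hAB e.toLinearMap he
    have hW' : ∀ w, tailCoords w = 0 → tailCoords (e.symm w) = 0 :=
      tail_map_zero C D A B hCD e.symm.toLinearMap he'
    -- the tail transporter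
    set t : (Fin n → F) →ₗ[F] (Fin n → F) :=
      LinearMap.funLeft F F (Fin.natAdd 2) ∘ₗ
        (e : (Fin (2 + n) → F) →ₗ[F] (Fin (2 + n) → F)) ∘ₗ jMap with htdef
    set t' : (Fin n → F) →ₗ[F] (Fin n → F) :=
      LinearMap.funLeft F F (Fin.natAdd 2) ∘ₗ
        (e.symm : (Fin (2 + n) → F) →ₗ[F] (Fin (2 + n) → F)) ∘ₗ jMap with ht'def
    have ht : ∀ u, tailCoords (e u) = t (tailCoords u) := by
      intro u
      have h0 : tailCoords (u - jMap (tailCoords u)) = 0 := by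
        rw [tailC_sub, tail_jMap, sub_self]
      have h1 := hW _ h0
      rw [map_sub, tailC_sub, sub_eq_zero] at h1
      exact h1
    have ht' : ∀ u, tailCoords (e.symm u) = t' (tailCoords u) := by
      intro u
      have h0 : tailCoords (u - jMap (tailCoords u)) = 0 := by
        rw [tailC_sub, tail_jMap, sub_self]
      have h1 := hW' _ h0
      rw [map_sub, tailC_sub, sub_eq_zero] at h1
      exact h1
    have htc : ∀ x, t (t' x) = x := by
      intro x
      have h1 := ht (e.symm (jMap x))
      rw [e.apply_symm_apply, tail_jMap, ht' (jMap x), tail_jMap] at h1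
      exact h1.symm
    have ht'c : ∀ x, t' (t x) = x := by
      intro x
      have h1 := ht' (e (jMap x))
      rw [e.symm_apply_apply, tail_jMap, ht (jMap x), tail_jMap] at h1
      exact h1.symm
    set S := LinearMap.toMatrix' t with hSdef
    set S' := LinearMap.toMatrix' t' with hS'def
    have hSmul : ∀ x, S *ᵥ x = t x := by
      intro x
      rw [hSdef, ← Matrix.toLin'_apply, Matrix.toLin'_toMatrix']
    have hSS' : S * S' = 1 := by
      rw [hSdef, hS'def, ← LinearMap.toMatrix'_comp,
        show t ∘ₗ t' = LinearMap.id from LinearMap.ext htc, LinearMap.toMatrix'_id]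
    have hS'S : S' * S = 1 := by
      rw [hSdef, hS'def, ← LinearMap.toMatrix'_comp,
        show t' ∘ₗ t = LinearMap.id from LinearMap.ext ht'c, LinearMap.toMatrix'_id]
    -- the head transporter
    set T : (Fin 2 → F) →ₗ[F] (Fin 2 → F) :=
      LinearMap.funLeft F F (Fin.castAdd n) ∘ₗ
        (e : (Fin (2 + n) → F) →ₗ[F] (Fin (2 + n) → F)) ∘ₗ j2Map with hTdef
    set T' : (Fin 2 → F) →ₗ[F] (Fin 2 → F) :=
      LinearMap.funLeft F F (Fin.castAdd n) ∘ₗ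
        (e.symm : (Fin (2 + n) → F) →ₗ[F] (Fin (2 + n) → F)) ∘ₗ j2Map with hT'def
    have hj2 : ∀ w : Fin (2 + n) → F, tailCoords w = 0 → j2Map (headCoords w) = w := by
      intro w hw0
      have h1 : (j2Map (headCoords w) : Fin (2 + n) → F)
          = Fin.append (headCoords w) (0 : Fin n → F) := rfl
      rw [h1, ← hw0, append_head_tail]
    have hTc : ∀ z, T' (T z) = z := by
      intro z
      have h0 : tailCoords (e (j2Map z)) = 0 := hW _ (tail_j2Map z)
      calc T' (T z) = headCoords (e.symm (j2Map (headCoords (e (j2Map z))))) := rfl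
        _ = headCoords (e.symm (e (j2Map z))) := by rw [hj2 _ h0]
        _ = z := by rw [e.symm_apply_apply, head_j2Map]
    have hT'c : ∀ z, T (T' z) = z := by
      intro z
      have h0 : tailCoords (e.symm (j2Map z)) = 0 := hW' _ (tail_j2Map z)
      calc T (T' z) = headCoords (e (j2Map (headCoords (e.symm (j2Map z))))) := rfl
        _ = headCoords (e (e.symm (j2Map z))) := by rw [hj2 _ h0]
        _ = z := by rw [e.apply_symm_apply, head_j2Map]
    set M := LinearMap.toMatrix' T with hMdef
    set M' := LinearMap.toMatrix' T' with hM'def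
    have hMmul : ∀ z, M *ᵥ z = T z := by
      intro z
      rw [hMdef, ← Matrix.toLin'_apply, Matrix.toLin'_toMatrix']
    have hMM' : M * M' = 1 := by
      rw [hMdef, hM'def, ← LinearMap.toMatrix'_comp,
        show T ∘ₗ T' = LinearMap.id from LinearMap.ext hT'c, LinearMap.toMatrix'_id]
    have hM'M : M' * M = 1 := by
      rw [hMdef, hM'def, ← LinearMap.toMatrix'_comp,
        show T' ∘ₗ T = LinearMap.id from LinearMap.ext hTc, LinearMap.toMatrix'_id]
    -- the key identity
    have key : ∀ x y : Fin n → F,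
        T ![x ⬝ᵥ A *ᵥ y, x ⬝ᵥ B *ᵥ y] = ![t x ⬝ᵥ C *ᵥ t y, t x ⬝ᵥ D *ᵥ t y] := by
      intro x y
      have h := he (jMap x) (jMap y)
      have hL : amul A B (jMap x) (jMap y) = j2Map ![x ⬝ᵥ A *ᵥ y, x ⬝ᵥ B *ᵥ y] := by
        show amul A B _ _ = Fin.append _ (0 : Fin n → F)
        rw [amul, tail_jMap, tail_jMap]
      rw [hL] at h
      have h2 := congrArg headCoords h
      have h3 : headCoords (e (j2Map ![x ⬝ᵥ A *ᵥ y, x ⬝ᵥ B *ᵥ y]))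
          = T ![x ⬝ᵥ A *ᵥ y, x ⬝ᵥ B *ᵥ y] := rfl
      rw [h3, head_amul, ht (jMap x), ht (jMap y), tail_jMap, tail_jMap] at h2
      exact h2
    have E1 : M 0 0 • A + M 0 1 • B = Sᵀ * C * S := by
      apply matrix_eq_of_dot
      intro x y
      rw [combo_dot, ← dot_conj, hSmul, hSmul]
      have hk := congrFun (key x y) 0
      rw [← hMmul, mulVec_fin2] at hk
      simp only [Matrix.cons_val_zero, Matrix.cons_val_one, Matrix.head_cons] at hk
      exact hk
    have E2 : M 1 0 • A + M 1 1 • B = Sᵀ * D * S := by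
      apply matrix_eq_of_dot
      intro x y
      rw [combo_dot, ← dot_conj, hSmul, hSmul]
      have hk := congrFun (key x y) 1
      rw [← hMmul, mulVec_fin2] at hk
      simp only [Matrix.cons_val_zero, Matrix.cons_val_one, Matrix.head_cons] at hk
      exact hk
    have hent : ∀ i j, M' i 0 * M 0 j + M' i 1 * M 1 j
        = (1 : Matrix (Fin 2) (Fin 2) F) i j := by
      intro i j
      rw [← entry_fin2, hM'M]
    refine ⟨S', M', isUnit_iff_exists.mpr ⟨S, hS'S, hSS'⟩,
      isUnit_iff_exists.mpr ⟨M, hM'M, hMM'⟩, ?_, ?_⟩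
    · have h00 := hent 0 0
      have h01 := hent 0 1
      simp only [Matrix.one_apply_eq, Matrix.one_apply_ne (by decide : (0 : Fin 2) ≠ 1)]
        at h00 h01
      have hA : A = M' 0 0 • (Sᵀ * C * S) + M' 0 1 • (Sᵀ * D * S) := by
        rw [← E1, ← E2]
        simp only [smul_add, smul_smul]
        rw [add_add_add_comm, ← add_smul, ← add_smul, h00, h01, one_smul, zero_smul, add_zero]
      rw [hA, Matrix.mul_add, Matrix.add_mul, Matrix.mul_smul, Matrix.mul_smul,
        Matrix.smul_mul, Matrix.smul_mul, conj_eq S S' hSS', conj_eq S S' hSS']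
    · have h10 := hent 1 0
      have h11 := hent 1 1
      simp only [Matrix.one_apply_eq, Matrix.one_apply_ne (by decide : (1 : Fin 2) ≠ 0)]
        at h10 h11
      have hB : B = M' 1 0 • (Sᵀ * C * S) + M' 1 1 • (Sᵀ * D * S) := by
        rw [← E1, ← E2]
        simp only [smul_add, smul_smul]
        rw [add_add_add_comm, ← add_smul, ← add_smul, h10, h11, one_smul, zero_smul, zero_add]
      rw [hB, Matrix.mul_add, Matrix.add_mul, Matrix.mul_smul, Matrix.mul_smul,
        Matrix.smul_mul, Matrix.smul_mul, conj_eq S S' hSS', conj_eq S S' hSS']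
  · -- congruent substitution ⟹ iso
    rintro ⟨S, r, hS, hr, h1, h2⟩
    have hSdet := (Matrix.isUnit_iff_isUnit_det S).mp hS
    have hrdet := (Matrix.isUnit_iff_isUnit_det r).mp hr
    have hSS : S * S⁻¹ = 1 := Matrix.mul_nonsing_inv S hSdet
    have hS'S : S⁻¹ * S = 1 := Matrix.nonsing_inv_mul S hSdet
    have hrr : r * r⁻¹ = 1 := Matrix.mul_nonsing_inv r hrdet
    have hr'r : r⁻¹ * r = 1 := Matrix.nonsing_inv_mul r hrdet
    have hent : ∀ i j, r⁻¹ i 0 * r 0 j + r⁻¹ i 1 * r 1 j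
        = (1 : Matrix (Fin 2) (Fin 2) F) i j := by
      intro i j
      rw [← entry_fin2, hr'r]
    -- the conjugated matrices
    have hCeq : S⁻¹ᵀ * C * S⁻¹ = r⁻¹ 0 0 • A + r⁻¹ 0 1 • B := by
      have h00 := hent 0 0
      have h01 := hent 0 1
      simp only [Matrix.one_apply_eq, Matrix.one_apply_ne (by decide : (0 : Fin 2) ≠ 1)]
        at h00 h01
      have hC : Sᵀ * (r⁻¹ 0 0 • A + r⁻¹ 0 1 • B) * S = C := by
        rw [Matrix.mul_add, Matrix.add_mul, Matrix.mul_smul, Matrix.mul_smul,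
          Matrix.smul_mul, Matrix.smul_mul, h1, h2]
        simp only [smul_add, smul_smul]
        rw [add_add_add_comm, ← add_smul, ← add_smul, h00, h01, one_smul, zero_smul, add_zero]
      rw [← hC, conj_eq S S⁻¹ hSS]
    have hDeq : S⁻¹ᵀ * D * S⁻¹ = r⁻¹ 1 0 • A + r⁻¹ 1 1 • B := by
      have h10 := hent 1 0
      have h11 := hent 1 1
      simp only [Matrix.one_apply_eq, Matrix.one_apply_ne (by decide : (1 : Fin 2) ≠ 0)]
        at h10 h11
      have hD : Sᵀ * (r⁻¹ 1 0 • A + r⁻¹ 1 1 • B) * S = D := by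
        rw [Matrix.mul_add, Matrix.add_mul, Matrix.mul_smul, Matrix.mul_smul,
          Matrix.smul_mul, Matrix.smul_mul, h1, h2]
        simp only [smul_add, smul_smul]
        rw [add_add_add_comm, ← add_smul, ← add_smul, h10, h11, one_smul, zero_smul, zero_add]
      rw [← hD, conj_eq S S⁻¹ hSS]
    refine ⟨LinearEquiv.ofLinear (blockMap r⁻¹ S⁻¹) (blockMap r S) ?_ ?_, ?_⟩
    · apply LinearMap.ext
      intro u
      rw [LinearMap.comp_apply, blockMap_blockMap, hr'r, hS'S, Matrix.one_mulVec,
        Matrix.one_mulVec, append_head_tail, LinearMap.id_apply]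
    · apply LinearMap.ext
      intro u
      rw [LinearMap.comp_apply, blockMap_blockMap, hrr, hSS, Matrix.one_mulVec,
        Matrix.one_mulVec, append_head_tail, LinearMap.id_apply]
    · intro u v
      show blockMap r⁻¹ S⁻¹ (amul A B u v)
        = amul C D (blockMap r⁻¹ S⁻¹ u) (blockMap r⁻¹ S⁻¹ v)
      rw [blockMap_apply, head_amul, tail_amul, Matrix.mulVec_zero]
      rw [show amul C D (blockMap r⁻¹ S⁻¹ u) (blockMap r⁻¹ S⁻¹ v)
          = Fin.append ![tailCoords (blockMap r⁻¹ S⁻¹ u) ⬝ᵥ C *ᵥ tailCoords (blockMap r⁻¹ S⁻¹ v),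
              tailCoords (blockMap r⁻¹ S⁻¹ u) ⬝ᵥ D *ᵥ tailCoords (blockMap r⁻¹ S⁻¹ v)] 0 from rfl]
      rw [tail_blockMap, tail_blockMap]
      congr 1
      rw [mulVec_fin2, dot_conj, dot_conj, hCeq, hDeq, combo_dot, combo_dot]
      simp
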